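/- For all natural numbers n and m with 0 < m < n, let B = C(n,m). For all indices i, j with 0 ≤ i, j ≤ B − 1, the Hamming distance between the code words C_{n,m}[i] and C_{n,m}[j] is at most 2·d_B(i, j); consequently, the two subsets of {1,…,n} whose indicator strings are C_{n,m}[i] and C_{n,m}[j] (each of size m) have at least m − d_B(i, j) common elements. -/

import Mathlib

/-- The Gray-style code `C_{n,m}`: a list of binary strings (lists of Booleans,
`true` = 1, `false` = 0).  `C_{0,0}` is the one-element list containing the empty
string, `C_{n,0} = [0^n]`, `C_{n,n} = [1^n]` for `n > 0`, and for `0 < m < n`,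
`C_{n,m}` is the concatenation of the list obtained by prepending `0` to every
string of `C_{n-1,m}` with the reverse of the list obtained by prepending `1` to
every string of `C_{n-1,m-1}`. -/
def grayCode : ℕ → ℕ → List (List Bool)
  | 0, _ => [[]]
  | n + 1, 0 => [List.replicate (n + 1) false]
  | n + 1, m + 1 =>
    if m + 1 = n + 1 then [List.replicate (n + 1) true]
    else (grayCode n (m + 1)).map (List.cons false) ++
      ((grayCode n m).map (List.cons true)).reverse


/-- The Hamming distance between two (equal-length) binary strings: the number of
positions at which they differ. -/
def listHammingDist : List Bool → List Bool → ℕ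
  | a :: as, b :: bs => (if a = b then 0 else 1) + listHammingDist as bs
  | _, _ => 0

/-- The cyclic distance between `x, y ∈ {0, …, q-1}`:
`d_q(x, y) = min (|x - y|, q - |x - y|)` (here on natural numbers, with
`Nat.dist x y = |x - y|`). -/
def natCyclicDist (q x y : ℕ) : ℕ := min (Nat.dist x y) (q - Nat.dist x y)

/-- The number of positions at which both binary strings carry a `1`, i.e. the
number of common elements of the two subsets of which they are indicator
strings. -/
def commonOnes : List Bool → List Bool → ℕ
  | a :: as, b :: bs => (if a = true ∧ b = true then 1 else 0) + commonOnes as bs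
  | _, _ => 0

namespace GrayAux

lemma ham_cons (x y : Bool) (as bs : List Bool) :
    listHammingDist (x::as) (y::bs) = (if x = y then 0 else 1) + listHammingDist as bs := rfl

lemma ham_self (a : List Bool) : listHammingDist a a = 0 := by
  induction a with
  | nil => rfl
  | cons x as ih => simp [ham_cons, ih]

lemma ham_comm (a : List Bool) : ∀ b, listHammingDist a b = listHammingDist b a := by
  induction a with
  | nil => intro b; cases b <;> rfl
  | cons x as ih =>
    intro b; cases b with
    | nil => rfl
    | cons y bs => simp [ham_cons, ih, eq_comm]

lemma ham_triangle (a : List Bool) : ∀ b c : List Bool, a.length = b.length →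
    listHammingDist a c ≤ listHammingDist a b + listHammingDist b c := by
  induction a with
  | nil => intro b c h; simp [listHammingDist]
  | cons x as ih =>
    intro b c h
    cases b with
    | nil => simp at h
    | cons y bs =>
      cases c with
      | nil => simp [listHammingDist]
      | cons z cs =>
        simp only [ham_cons]
        have := ih bs cs (by simpa using h)
        have hb : (if x = z then 0 else 1) ≤ (if x = y then 0 else 1) + (if y = z then 0 else 1) := by
          cases x <;> cases y <;> cases z <;> simp
        omega

lemma ham_append (s : List Bool) : ∀ u v, listHammingDist (s ++ u) (s ++ v) = listHammingDist u v := by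
  induction s with
  | nil => intro u v; rfl
  | cons x xs ih => intro u v; simp [ham_cons, ih]

lemma common_cons (x y : Bool) (as bs : List Bool) :
    commonOnes (x::as) (y::bs) = (if x = true ∧ y = true then 1 else 0) + commonOnes as bs := rfl

lemma common_comm (a : List Bool) : ∀ b, commonOnes a b = commonOnes b a := by
  induction a with
  | nil => intro b; cases b <;> rfl
  | cons x as ih =>
    intro b; cases b with
    | nil => rfl
    | cons y bs => simp [common_cons, ih, and_comm]

lemma ham_common (a : List Bool) : ∀ b, a.length = b.length →
    listHammingDist a b + 2 * commonOnes a b = commonOnes a a + commonOnes b b := by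
  induction a with
  | nil => intro b h; cases b <;> simp_all [listHammingDist, commonOnes]
  | cons x as ih =>
    intro b h
    cases b with
    | nil => simp at h
    | cons y bs =>
      simp only [ham_cons, common_cons]
      have := ih bs (by simpa using h)
      cases x <;> cases y <;> simp only [common_cons, ham_cons] <;> simp <;> omega

lemma common_self (a : List Bool) : commonOnes a a = a.count true := by
  induction a with
  | nil => rfl
  | cons x as ih => cases x <;> simp [common_cons, ih, List.count_cons] <;> omega

end GrayAux

namespace GrayAux

/-- first element of `C_{n,m}`. -/
def hd (n m : ℕ) : List Bool := List.replicate (n-m) false ++ List.replicate m true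

/-- last element of `C_{n,m}`. -/
def lst (n m : ℕ) : List Bool :=
  if m = 0 then List.replicate n false
  else true :: (List.replicate (n-m) false ++ List.replicate (m-1) true)

/-- `0^a 1^(k+1)` and `0^(a+1) 1^k` differ in exactly one position. -/
lemma ham_shift (a k : ℕ) :
    listHammingDist (List.replicate a false ++ List.replicate (k+1) true)
      (List.replicate (a+1) false ++ List.replicate k true) = 1 := by
  have h2 : List.replicate (a+1) false ++ List.replicate k true
      = List.replicate a false ++ (false :: List.replicate k true) := by
    simp [List.replicate_succ']
  rw [h2, List.replicate_succ, ham_append, ham_cons, ham_self]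
  simp

lemma ham_lst_lst {n m : ℕ} (h : m + 1 ≤ n) :
    listHammingDist (lst n (m+1)) (lst n m) ≤ 1 := by
  rcases Nat.eq_zero_or_pos m with rfl | hm
  · have e1 : lst n (0+1) = true :: List.replicate (n-1) false := by simp [lst]
    have e2 : lst n 0 = List.replicate n false := by simp [lst]
    have e3 : List.replicate n false = false :: List.replicate (n-1) false := by
      rw [← List.replicate_succ]; congr 1; omega
    rw [e1, e2, e3, ham_cons, ham_self]
    simp
  · simp only [lst, if_neg (by omega : m + 1 ≠ 0), if_neg (by omega : m ≠ 0)]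
    rw [ham_cons]
    have e1 : n - (m+1) + 1 = n - m := by omega
    have e2 : m - 1 + 1 = m := by omega
    have := ham_shift (n - (m+1)) (m-1)
    rw [e1, e2] at this
    simp only [Nat.add_sub_cancel] at this ⊢
    simp [this]

lemma ham_lst_hd {n m : ℕ} (hm : 0 < m) (h : m ≤ n) :
    listHammingDist (lst n m) (hd n m) ≤ 2 := by
  rcases Nat.lt_or_ge m n with hlt | hge
  · have e1 : lst n m = true :: (List.replicate (n-m) false ++ List.replicate (m-1) true) := by
      simp only [lst, if_neg (by omega : m ≠ 0)]
    have e2 : hd n m = false :: (List.replicate (n-m-1) false ++ List.replicate m true) := by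
      simp only [hd, ← List.cons_append, ← List.replicate_succ]
      congr 2
      omega
    have h1 := ham_shift (n-m-1) (m-1)
    rw [show m-1+1 = m from by omega, show n-m-1+1 = n-m from by omega] at h1
    rw [e1, e2, ham_cons, ham_comm _ _, h1]
    simp
  · have : m = n := le_antisymm h hge
    subst this
    simp only [lst, hd, if_neg (by omega : m ≠ 0), Nat.sub_self]
    have hm1 : m = (m-1)+1 := by omega
    rw [hm1, List.replicate_succ]
    simp [ham_cons, ham_self]

end GrayAux

namespace GrayAux

def Adj (a b : List Bool) : Prop := listHammingDist a b ≤ 2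

lemma adj_symm {a b : List Bool} (h : Adj a b) : Adj b a := by
  unfold Adj at *; rwa [ham_comm]

lemma gray_main : ∀ n m, m ≤ n →
    (grayCode n m).length = n.choose m ∧
    (∀ s ∈ grayCode n m, s.length = n ∧ s.count true = m) ∧
    (grayCode n m).head? = some (hd n m) ∧
    (grayCode n m).getLast? = some (lst n m) ∧
    (grayCode n m).Chain' Adj := by
  intro n
  induction n with
  | zero =>
    intro m hm
    interval_cases m
    simp [grayCode, hd, lst, List.Chain']
  | succ n ih =>
    intro m hm
    match m with
    | 0 =>
      simp [grayCode, hd, lst, List.count_replicate, List.Chain']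
    | m + 1 =>
      by_cases hcase : m + 1 = n + 1
      · rw [show grayCode (n+1) (m+1) = [List.replicate (n+1) true] from by
          rw [grayCode]; simp [hcase]]
        have hmn : m = n := by omega
        subst hmn
        refine ⟨by simp [Nat.choose_self], ?_, ?_, ?_, by simp [List.Chain']⟩
        · intro s hs; simp at hs; subst hs; simp
        · simp [hd, List.head?]
        · simp [lst, List.replicate_succ]
      · have hmle : m + 1 ≤ n := by omega
        rw [show grayCode (n+1) (m+1) = (grayCode n (m+1)).map (List.cons false) ++
            ((grayCode n m).map (List.cons true)).reverse from by rw [grayCode]; simp [hcase, show m ≠ n by omega]]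
        obtain ⟨lA, eA, hA, lstA, cA⟩ := ih (m+1) hmle
        obtain ⟨lB, eB, hB, lstB, cB⟩ := ih m (by omega)
        have hAne : grayCode n (m+1) ≠ [] := by
          intro h; rw [h] at hA; simp at hA
        have hBne : grayCode n m ≠ [] := by
          intro h; rw [h] at hB; simp at hB
        refine ⟨?_, ?_, ?_, ?_, ?_⟩
        · simp [lA, lB, Nat.choose_succ_succ]
          omega
        · intro s hs
          simp only [List.mem_append, List.mem_reverse, List.mem_map] at hs
          rcases hs with ⟨t, ht, rfl⟩ | ⟨t, ht, rfl⟩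
          · obtain ⟨h1, h2⟩ := eA t ht
            simp [h1, h2, List.count_cons]
          · obtain ⟨h1, h2⟩ := eB t ht
            simp [h1, h2, List.count_cons]
        · rw [List.head?_append, List.head?_map, hA]
          simp only [Option.map_some, Option.some_or]
          congr 1
          simp only [hd]
          rw [show (List.replicate (n+1-(m+1)) false : List Bool)
              = false :: List.replicate (n-(m+1)) false from by
            rw [show n+1-(m+1) = n-(m+1)+1 from by omega]; rfl, List.cons_append]
        · rw [List.getLast?_append, List.getLast?_reverse, List.head?_map, hB]
          simp only [Option.map_some, Option.some_or]
          congr 1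
          simp only [lst, hd, if_neg (by omega : m + 1 ≠ 0)]
          rw [show n + 1 - (m+1) = n - m from by omega, Nat.add_sub_cancel]
        · unfold List.Chain' at cA cB ⊢; rw [List.isChain_append]
          refine ⟨?_, ?_, ?_⟩
          · rw [List.isChain_map]
            refine cA.imp ?_
            intro a b hab
            unfold Adj at *
            rw [ham_cons]
            simpa using hab
          · rw [List.isChain_reverse, List.isChain_map]
            refine cB.imp ?_
            intro a b hab
            have : Adj a b := hab
            have := adj_symm this
            unfold Adj at *
            show listHammingDist (true :: b) (true :: a) ≤ 2
            rw [ham_cons]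
            simpa using this
          · intro x hx y hy
            rw [List.getLast?_map, lstA] at hx
            rw [List.head?_reverse, List.getLast?_map, lstB] at hy
            simp only [Option.map_some, Option.mem_def, Option.some.injEq] at hx hy
            subst hx; subst hy
            unfold Adj
            rw [ham_cons]
            have := ham_lst_lst hmle
            simp only [if_neg (by simp : ¬ false = true)]
            omega

end GrayAux

namespace GrayAux

lemma getD_zero {L : List (List Bool)} {x : List Bool} (h : L.head? = some x) :
    L.getD 0 [] = x := by
  cases L with
  | nil => simp at h
  | cons a l => simp_all [List.getD]

lemma getD_last {L : List (List Bool)} {x : List Bool} (h : L.getLast? = some x) :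
    L.getD (L.length - 1) [] = x := by
  have hne : L ≠ [] := by rintro rfl; simp at h
  rw [List.getLast?_eq_getLast hne, Option.some_inj] at h
  rw [← h, List.getLast_eq_getElem, List.getD_eq_getElem]

lemma chain_getD {L : List (List Bool)} (hc : L.Chain' Adj) :
    ∀ k, k + 1 < L.length → listHammingDist (L.getD k []) (L.getD (k+1) []) ≤ 2 := by
  intro k hk
  rw [List.getD_eq_getElem _ _ (by omega), List.getD_eq_getElem _ _ hk]
  exact List.isChain_iff_getElem.mp hc k hk

lemma getD_mem {L : List (List Bool)} {k : ℕ} (hk : k < L.length) : L.getD k [] ∈ L := by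
  rw [List.getD_eq_getElem _ _ hk]; exact List.getElem_mem hk

lemma ham_getD {L : List (List Bool)} {n : ℕ} (hc : L.Chain' Adj)
    (hlen : ∀ s ∈ L, s.length = n) :
    ∀ d i, i + d < L.length → listHammingDist (L.getD i []) (L.getD (i+d) []) ≤ 2 * d := by
  intro d
  induction d with
  | zero => intro i h; simp [ham_self]
  | succ d ihd =>
    intro i h
    have h1 := ihd i (by omega)
    have h2 := chain_getD hc (i+d) (by omega)
    have hl : (L.getD i []).length = (L.getD (i+d) []).length := by
      rw [hlen _ (getD_mem (by omega)), hlen _ (getD_mem (by omega))]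
    have h3 := ham_triangle (L.getD i []) (L.getD (i+d) []) (L.getD (i+d+1) []) hl
    rw [show i+(d+1) = i+d+1 from rfl]
    omega

lemma cyc_comm (q x y : ℕ) : natCyclicDist q x y = natCyclicDist q y x := by
  unfold natCyclicDist; rw [Nat.dist_comm]

lemma key (n m : ℕ) (hm : 0 < m) (hmn : m < n) {i j : ℕ} (hij : i ≤ j)
    (hj : j < n.choose m) :
    listHammingDist ((grayCode n m).getD i []) ((grayCode n m).getD j [])
        ≤ 2 * natCyclicDist (n.choose m) i j ∧
    (m : ℤ) - (natCyclicDist (n.choose m) i j : ℤ)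
        ≤ (commonOnes ((grayCode n m).getD i []) ((grayCode n m).getD j []) : ℤ) := by
  obtain ⟨hlen, helem, hhead, hlast, hchain⟩ := gray_main n m hmn.le
  set L := grayCode n m with hL
  set B := n.choose m with hB
  have hlens : ∀ s ∈ L, s.length = n := fun s hs => (helem s hs).1
  have hi : i < B := lt_of_le_of_lt hij hj
  -- direct bound
  have b1 : listHammingDist (L.getD i []) (L.getD j []) ≤ 2 * (j - i) := by
    have := ham_getD hchain hlens (j - i) i (by rw [hlen]; omega)
    rwa [show i + (j - i) = j from by omega] at this
  -- around-the-cycle bound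
  have b0i : listHammingDist (L.getD 0 []) (L.getD i []) ≤ 2 * i := by
    have := ham_getD hchain hlens i 0 (by rw [hlen]; omega)
    simpa using this
  have bjB : listHammingDist (L.getD j []) (L.getD (B-1) []) ≤ 2 * (B - 1 - j) := by
    have := ham_getD hchain hlens (B - 1 - j) j (by rw [hlen]; omega)
    rwa [show j + (B - 1 - j) = B - 1 from by omega] at this
  have bB0 : listHammingDist (L.getD (B-1) []) (L.getD 0 []) ≤ 2 := by
    rw [getD_zero hhead]
    rw [show L.getD (B-1) [] = lst n m from by
      rw [← getD_last hlast, hlen]]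
    exact ham_lst_hd hm hmn.le
  have leq : ∀ k l : ℕ, k < B → l < B → (L.getD k []).length = (L.getD l []).length := by
    intro k l hk hl
    rw [hlens _ (getD_mem (by omega)), hlens _ (getD_mem (by omega))]
  have t1 := ham_triangle (L.getD i []) (L.getD 0 []) (L.getD j [])
    (leq i 0 hi (by omega))
  have t2 := ham_triangle (L.getD 0 []) (L.getD (B-1) []) (L.getD j [])
    (leq 0 (B-1) (by omega) (by omega))
  have g1 : listHammingDist (L.getD i []) (L.getD 0 []) ≤ 2 * i := by
    rw [ham_comm]; exact b0i
  have g2 : listHammingDist (L.getD 0 []) (L.getD (B-1) []) ≤ 2 := by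
    rw [ham_comm]; exact bB0
  have g3 : listHammingDist (L.getD (B-1) []) (L.getD j []) ≤ 2 * (B - 1 - j) := by
    rw [ham_comm]; exact bjB
  have b2 : listHammingDist (L.getD i []) (L.getD j []) ≤ 2 * (B - (j - i)) := by omega
  have hdist : natCyclicDist B i j = min (j - i) (B - (j - i)) := by
    unfold natCyclicDist; rw [Nat.dist_eq_sub_of_le hij]
  constructor
  · rw [hdist]; omega
  · have hmi := helem _ (getD_mem (show i < L.length from by omega))
    have hmj := helem _ (getD_mem (show j < L.length from by omega))
    have hco := ham_common (L.getD i []) (L.getD j []) (hmi.1.trans hmj.1.symm)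
    rw [common_self, common_self, hmi.2, hmj.2] at hco
    rw [hdist] at *
    omega

end GrayAux


/-- For all natural numbers `n` and `m` with `0 < m < n`, let `B = C(n,m)`.  For
all indices `i, j ≤ B - 1`, the Hamming distance between the code words
`C_{n,m}[i]` and `C_{n,m}[j]` is at most `2 · d_B(i, j)`; consequently, the two
subsets of `{1,…,n}` whose indicator strings are `C_{n,m}[i]` and `C_{n,m}[j]`
(each of size `m`) have at least `m - d_B(i, j)` common elements. -/
theorem grayCode_cyclic_hamming_bound (n m : ℕ) (hm : 0 < m) (hmn : m < n)
    (i j : ℕ) (hi : i ≤ n.choose m - 1) (hj : j ≤ n.choose m - 1) :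
    listHammingDist ((grayCode n m).getD i []) ((grayCode n m).getD j [])
        ≤ 2 * natCyclicDist (n.choose m) i j ∧
    (m : ℤ) - (natCyclicDist (n.choose m) i j : ℤ)
        ≤ (commonOnes ((grayCode n m).getD i []) ((grayCode n m).getD j []) : ℤ) := by
  have hBpos : 0 < n.choose m := Nat.choose_pos hmn.le
  have hi' : i < n.choose m := by omega
  have hj' : j < n.choose m := by omega
  rcases le_total i j with hij | hji
  · exact GrayAux.key n m hm hmn hij hj'
  · have h := GrayAux.key n m hm hmn hji hi'
    rw [GrayAux.ham_comm, GrayAux.common_comm, GrayAux.cyc_comm] at h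
    exact h
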